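/- For the pseudocaterpillar tree P_n (n ≥ 4), whose root has as children the caterpillar C_{n−2} and a cherry, the number of root ancestral configurations is c(P_n) = 2(n−2) and the number of labeled histories is h(P_n) = n−2. -/

import Mathlib

/-- Binary rooted trees (leaf labels abstracted away; leaves are identified
by their positions, encoded as lists of booleans). -/
inductive BTree : Type
  | leaf : BTree
  | node : BTree → BTree → BTree
  deriving DecidableEq

namespace BTree

/-- A position in a binary tree: a path from the root, `false` = left, `true` = right. -/
abbrev Pos := List Bool

/-- The subtree rooted at a position (junk value `leaf` below a leaf). -/
def subtreeAt : BTree → Pos → BTree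
  | t, [] => t
  | leaf, _ :: _ => leaf
  | node l _, false :: p => subtreeAt l p
  | node _ r, true :: p => subtreeAt r p

/-- `p` is a valid position (node) of the tree. -/
def isValidPos : BTree → Pos → Prop
  | _, [] => True
  | leaf, _ :: _ => False
  | node l _, false :: p => isValidPos l p
  | node _ r, true :: p => isValidPos r p

/-- The set of positions of the leaves of a tree. -/
def leafPositions : BTree → Finset Pos
  | leaf => {([] : Pos)}
  | node l r =>
      (leafPositions l).image (false :: ·) ∪ (leafPositions r).image (true :: ·)

/-- The number of leaves of a tree. -/
def numLeaves (t : BTree) : ℕ := (leafPositions t).card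

/-- The set of positions of the internal (non-leaf) nodes of a tree. -/
def internalPos : BTree → Finset Pos
  | leaf => ∅
  | node l r =>
      insert ([] : Pos)
        ((internalPos l).image (false :: ·) ∪ (internalPos r).image (true :: ·))

/-- A root ancestral configuration of `S`: an antichain of non-root nodes of `S`
whose descendant-leaf sets partition the leaf set, i.e. a set of valid non-root
positions such that every leaf position has exactly one weak ancestor in the set. -/
def IsConfig (S : BTree) (A : Finset Pos) : Prop :=
  (∀ p ∈ A, isValidPos S p ∧ p ≠ []) ∧
  ∀ q ∈ leafPositions S, ∃! p, p ∈ A ∧ p <+: q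

/-- The partial order on configurations: `ConfigLE A B` (that is, `A ≺ B`) iff `B`
is obtained from `A` by coalescing some (possibly no) pairs of lineages;
equivalently, every node of `A` is a weak descendant of some node of `B`. -/
def ConfigLE (A B : Finset Pos) : Prop :=
  ∀ p ∈ A, ∃ q ∈ B, q <+: p

/-- The covering relation on root ancestral configurations of `S`. -/
def Covers (S : BTree) (A B : Finset Pos) : Prop :=
  IsConfig S A ∧ IsConfig S B ∧ ConfigLE A B ∧ A ≠ B ∧
  ∀ C, IsConfig S C → ConfigLE A C → ConfigLE C B → C = A ∨ C = B

/-- The maximal root configuration: the two children of the root. -/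
def rootConfig : Finset Pos := {[false], [true]}

/-- The number of root ancestral configurations of `S`. -/
noncomputable def numConfigs (S : BTree) : ℕ := Nat.card {A : Finset Pos // IsConfig S A}

/-- A labeled history of `S`: a linear ordering of the internal nodes of `S`
in which every internal node appears after all of its internal descendants. -/
def IsLabHist (S : BTree) (L : List Pos) : Prop :=
  L.Nodup ∧ (∀ p, p ∈ L ↔ p ∈ internalPos S) ∧
  ∀ i j : Fin L.length, L.get i <+: L.get j → (j : ℕ) ≤ (i : ℕ)

/-- The number of labeled histories of `S`. -/
noncomputable def numHist (S : BTree) : ℕ := Nat.card {L : List Pos // IsLabHist S L}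

/-- The caterpillar tree on `n` leaves (`caterpillar 1` is a single leaf). -/
def caterpillar : ℕ → BTree
  | 0 => leaf
  | 1 => leaf
  | n + 2 => node (caterpillar (n + 1)) leaf

end BTree

open BTree

attribute [local instance 2000] instBEqOfDecidableEq

/-! ### Auxiliary: covers (configurations allowed to contain the root) -/

/-- A "cover" of `t`: like a config but the root position is allowed. -/
def Cover (t : BTree) (A : Finset Pos) : Prop :=
  (∀ p ∈ A, isValidPos t p) ∧ ∀ q ∈ leafPositions t, ∃! p, p ∈ A ∧ p <+: q


/-- combine two sets of positions of the subtrees into positions of the node -/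
def pairUnion (a b : Finset Pos) : Finset Pos :=
  a.image (false :: ·) ∪ b.image (true :: ·)

lemma mem_pairUnion {a b : Finset Pos} {p : Pos} :
    p ∈ pairUnion a b ↔ (∃ x ∈ a, p = false :: x) ∨ (∃ x ∈ b, p = true :: x) := by
  simp [pairUnion, Finset.mem_union, eq_comm]

lemma pairUnion_inj {a b c d : Finset Pos} (h : pairUnion a b = pairUnion c d) :
    a = c ∧ b = d := by
  constructor <;> ext x
  · have h1 : (false :: x) ∈ pairUnion a b ↔ (false :: x) ∈ pairUnion c d := by rw [h]
    simpa [mem_pairUnion] using h1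
  · have h1 : (true :: x) ∈ pairUnion a b ↔ (true :: x) ∈ pairUnion c d := by rw [h]
    simpa [mem_pairUnion] using h1

lemma leafPositions_node (l r : BTree) :
    leafPositions (BTree.node l r) = pairUnion (leafPositions l) (leafPositions r) := rfl

lemma internalPos_node (l r : BTree) :
    internalPos (BTree.node l r) =
      insert ([] : Pos) (pairUnion (internalPos l) (internalPos r)) := rfl

lemma leafPositions_nonempty (t : BTree) : (leafPositions t).Nonempty := by
  induction t with
  | leaf => exact ⟨[], by simp [leafPositions]⟩
  | node l r ihl ihr =>
      obtain ⟨q, hq⟩ := ihl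
      exact ⟨false :: q, by rw [leafPositions_node, mem_pairUnion]; exact Or.inl ⟨q, hq, rfl⟩⟩

lemma valid_exists_leaf : ∀ (t : BTree) (p : Pos), isValidPos t p →
    ∃ q ∈ leafPositions t, p <+: q := by
  intro t
  induction t with
  | leaf =>
      intro p hp
      cases p with
      | nil => exact ⟨[], by simp [leafPositions], List.nil_prefix⟩
      | cons b p => exact absurd hp (by simp [isValidPos])
  | node l r ihl ihr =>
      intro p hp
      cases p with
      | nil =>
          obtain ⟨q, hq⟩ := leafPositions_nonempty (BTree.node l r)
          exact ⟨q, hq, List.nil_prefix⟩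
      | cons b p =>
          cases b with
          | false =>
              obtain ⟨q, hq, hpre⟩ := ihl p hp
              refine ⟨false :: q, ?_, by simpa [List.cons_prefix_cons] using hpre⟩
              rw [leafPositions_node, mem_pairUnion]
              exact Or.inl ⟨q, hq, rfl⟩
          | true =>
              obtain ⟨q, hq, hpre⟩ := ihr p hp
              refine ⟨true :: q, ?_, by simpa [List.cons_prefix_cons] using hpre⟩
              rw [leafPositions_node, mem_pairUnion]
              exact Or.inr ⟨q, hq, rfl⟩

lemma cover_leaf {A : Finset Pos} : Cover BTree.leaf A ↔ A = {([] : Pos)} := by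
  constructor
  · rintro ⟨hval, huniq⟩
    obtain ⟨p, ⟨hpA, hppre⟩, -⟩ := huniq [] (by simp [leafPositions])
    have hp : p = [] := List.prefix_nil.mp hppre
    subst hp
    ext x
    simp only [Finset.mem_singleton]
    constructor
    · intro hx
      cases x with
      | nil => rfl
      | cons b x => exact absurd (hval _ hx) (by simp [isValidPos])
    · rintro rfl; exact hpA
  · rintro rfl
    refine ⟨by simp [isValidPos], ?_⟩
    intro q hq
    simp [leafPositions] at hq
    subst hq
    exact ⟨[], ⟨by simp, List.nil_prefix⟩, by rintro y ⟨hy, -⟩; simpa using hy⟩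

lemma cover_node {l r : BTree} {A : Finset Pos} :
    Cover (BTree.node l r) A ↔
      A = {([] : Pos)} ∨ ∃ a b, Cover l a ∧ Cover r b ∧ A = pairUnion a b := by
  constructor
  · rintro ⟨hval, huniq⟩
    by_cases hroot : ([] : Pos) ∈ A
    · left
      ext p
      simp only [Finset.mem_singleton]
      constructor
      · intro hp
        obtain ⟨q, hq, hpre⟩ := valid_exists_leaf _ p (hval p hp)
        obtain ⟨p0, -, hu⟩ := huniq q hq
        have h1 := hu p ⟨hp, hpre⟩
        have h2 := hu [] ⟨hroot, List.nil_prefix⟩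
        rw [h1, ← h2]
      · rintro rfl; exact hroot
    · right
      have hinj : ∀ (c : Bool), Set.InjOn (c :: ·) ((c :: ·) ⁻¹' (A : Set Pos)) := by
        intro c x _ y _ h; simpa using h
      refine ⟨A.preimage (false :: ·) (hinj false), A.preimage (true :: ·) (hinj true),
        ?_, ?_, ?_⟩
      · constructor
        · intro p hp
          have := hval (false :: p) (by simpa [Finset.mem_preimage] using hp)
          simpa [isValidPos] using this
        · intro q hq
          have hq' : (false :: q) ∈ leafPositions (BTree.node l r) := by
            rw [leafPositions_node, mem_pairUnion]; exact Or.inl ⟨q, hq, rfl⟩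
          obtain ⟨p, ⟨hpA, hppre⟩, hu⟩ := huniq _ hq'
          cases p with
          | nil => exact absurd hpA hroot
          | cons b p' =>
              obtain ⟨hb, hp'⟩ := List.cons_prefix_cons.mp hppre
              subst hb
              refine ⟨p', ⟨⟨by simpa [Finset.mem_preimage], hp'⟩, ?_⟩⟩
              rintro y ⟨hyA, hypre⟩
              have := hu (false :: y)
                ⟨by simpa [Finset.mem_preimage] using hyA, by simpa [List.cons_prefix_cons]⟩
              simpa using this
      · constructor
        · intro p hp
          have := hval (true :: p) (by simpa [Finset.mem_preimage] using hp)
          simpa [isValidPos] using this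
        · intro q hq
          have hq' : (true :: q) ∈ leafPositions (BTree.node l r) := by
            rw [leafPositions_node, mem_pairUnion]; exact Or.inr ⟨q, hq, rfl⟩
          obtain ⟨p, ⟨hpA, hppre⟩, hu⟩ := huniq _ hq'
          cases p with
          | nil => exact absurd hpA hroot
          | cons b p' =>
              obtain ⟨hb, hp'⟩ := List.cons_prefix_cons.mp hppre
              subst hb
              refine ⟨p', ⟨⟨by simpa [Finset.mem_preimage], hp'⟩, ?_⟩⟩
              rintro y ⟨hyA, hypre⟩
              have := hu (true :: y)
                ⟨by simpa [Finset.mem_preimage] using hyA, by simpa [List.cons_prefix_cons]⟩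
              simpa using this
      · ext p
        rw [mem_pairUnion]
        constructor
        · intro hp
          cases p with
          | nil => exact absurd hp hroot
          | cons b p' =>
              cases b with
              | false => exact Or.inl ⟨p', by simpa [Finset.mem_preimage], rfl⟩
              | true => exact Or.inr ⟨p', by simpa [Finset.mem_preimage], rfl⟩
        · rintro (⟨x, hx, rfl⟩ | ⟨x, hx, rfl⟩) <;> simpa [Finset.mem_preimage] using hx
  · rintro (rfl | ⟨a, b, ⟨haval, hauniq⟩, ⟨hbval, hbuniq⟩, rfl⟩)
    · refine ⟨by simp [isValidPos], ?_⟩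
      intro q hq
      exact ⟨[], ⟨by simp, List.nil_prefix⟩, by rintro y ⟨hy, -⟩; simpa using hy⟩
    · constructor
      · intro p hp
        rw [mem_pairUnion] at hp
        rcases hp with ⟨x, hx, rfl⟩ | ⟨x, hx, rfl⟩
        · simpa [isValidPos] using haval x hx
        · simpa [isValidPos] using hbval x hx
      · intro q hq
        rw [leafPositions_node, mem_pairUnion] at hq
        rcases hq with ⟨q', hq', rfl⟩ | ⟨q', hq', rfl⟩
        · obtain ⟨p, ⟨hpA, hppre⟩, hu⟩ := hauniq q' hq'
          refine ⟨false :: p, ⟨⟨mem_pairUnion.mpr (Or.inl ⟨p, hpA, rfl⟩),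
            by simpa [List.cons_prefix_cons]⟩, ?_⟩⟩
          rintro y ⟨hyA, hypre⟩
          rw [mem_pairUnion] at hyA
          rcases hyA with ⟨x, hx, rfl⟩ | ⟨x, hx, rfl⟩
          · obtain ⟨-, hpre⟩ := List.cons_prefix_cons.mp hypre
            rw [hu x ⟨hx, hpre⟩]
          · exact absurd (List.cons_prefix_cons.mp hypre).1 (by simp)
        · obtain ⟨p, ⟨hpA, hppre⟩, hu⟩ := hbuniq q' hq'
          refine ⟨true :: p, ⟨⟨mem_pairUnion.mpr (Or.inr ⟨p, hpA, rfl⟩),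
            by simpa [List.cons_prefix_cons]⟩, ?_⟩⟩
          rintro y ⟨hyA, hypre⟩
          rw [mem_pairUnion] at hyA
          rcases hyA with ⟨x, hx, rfl⟩ | ⟨x, hx, rfl⟩
          · exact absurd (List.cons_prefix_cons.mp hypre).1 (by simp)
          · obtain ⟨-, hpre⟩ := List.cons_prefix_cons.mp hypre
            rw [hu x ⟨hx, hpre⟩]

/-- The finset of covers of a tree. -/
def coversF : BTree → Finset (Finset Pos)
  | BTree.leaf => {{([] : Pos)}}
  | BTree.node l r =>
      insert {([] : Pos)} ((coversF l ×ˢ coversF r).image fun ab => pairUnion ab.1 ab.2)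

lemma mem_coversF : ∀ (t : BTree) (A : Finset Pos), Cover t A ↔ A ∈ coversF t := by
  intro t
  induction t with
  | leaf => intro A; simp [cover_leaf, coversF]
  | node l r ihl ihr =>
      intro A
      rw [cover_node]
      simp only [coversF, Finset.mem_insert, Finset.mem_image, Finset.mem_product]
      constructor
      · rintro (rfl | ⟨a, b, ha, hb, rfl⟩)
        · exact Or.inl rfl
        · exact Or.inr ⟨(a, b), ⟨(ihl a).mp ha, (ihr b).mp hb⟩, rfl⟩
      · rintro (rfl | ⟨⟨a, b⟩, ⟨ha, hb⟩, rfl⟩)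
        · exact Or.inl rfl
        · exact Or.inr ⟨a, b, (ihl a).mpr ha, (ihr b).mpr hb, rfl⟩

lemma cover_nonempty {t : BTree} {A : Finset Pos} (h : Cover t A) : A.Nonempty := by
  obtain ⟨q, hq⟩ := leafPositions_nonempty t
  obtain ⟨p, ⟨hp, -⟩, -⟩ := h.2 q hq
  exact ⟨p, hp⟩

lemma root_not_mem_image (l r : BTree) :
    {([] : Pos)} ∉ (coversF l ×ˢ coversF r).image fun ab => pairUnion ab.1 ab.2 := by
  rw [Finset.mem_image]
  rintro ⟨⟨a, b⟩, hab, habs⟩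
  rw [Finset.mem_product] at hab
  obtain ⟨x, hx⟩ := cover_nonempty ((mem_coversF l a).mpr hab.1)
  have : (false :: x) ∈ pairUnion a b := mem_pairUnion.mpr (Or.inl ⟨x, hx, rfl⟩)
  rw [habs] at this
  simp at this

lemma image_injOn (l r : BTree) :
    Set.InjOn (fun ab : Finset Pos × Finset Pos => pairUnion ab.1 ab.2)
      ↑(coversF l ×ˢ coversF r) := by
  rintro ⟨a, b⟩ hab ⟨c, d⟩ hcd h
  obtain ⟨h1, h2⟩ := pairUnion_inj h
  simp only [Prod.mk.injEq]
  exact ⟨h1, h2⟩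

lemma coversF_card_node (l r : BTree) :
    (coversF (BTree.node l r)).card = 1 + (coversF l).card * (coversF r).card := by
  rw [show coversF (BTree.node l r) = insert {([] : Pos)}
      ((coversF l ×ˢ coversF r).image fun ab => pairUnion ab.1 ab.2) from rfl]
  rw [Finset.card_insert_of_notMem (root_not_mem_image l r),
    Finset.card_image_of_injOn (image_injOn l r), Finset.card_product]
  omega

lemma coversF_caterpillar_card : ∀ m : ℕ, (coversF (caterpillar (m + 1))).card = m + 1 := by
  intro m
  induction m with
  | zero => simp [caterpillar, coversF]
  | succ k ih =>
      show (coversF (caterpillar (k + 2))).card = k + 2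
      rw [show caterpillar (k + 2) = BTree.node (caterpillar (k + 1)) BTree.leaf from rfl,
        coversF_card_node, ih]
      simp [coversF]
      omega



/-! ### Configuration count of a node -/

lemma isConfig_node_iff {l r : BTree} {A : Finset Pos} :
    IsConfig (BTree.node l r) A ↔
      A ∈ (coversF l ×ˢ coversF r).image (fun ab => pairUnion ab.1 ab.2) := by
  constructor
  · intro h
    have hcov : Cover (BTree.node l r) A := ⟨fun p hp => (h.1 p hp).1, h.2⟩
    rcases cover_node.mp hcov with rfl | ⟨a, b, ha, hb, rfl⟩
    · exact absurd rfl (h.1 [] (by simp)).2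
    · exact Finset.mem_image.mpr ⟨(a, b),
        Finset.mem_product.mpr ⟨(mem_coversF _ _).mp ha, (mem_coversF _ _).mp hb⟩, rfl⟩
  · intro h
    obtain ⟨⟨a, b⟩, hab, rfl⟩ := Finset.mem_image.mp h
    rw [Finset.mem_product] at hab
    have ha := (mem_coversF _ _).mpr hab.1
    have hb := (mem_coversF _ _).mpr hab.2
    have hcov : Cover (BTree.node l r) (pairUnion a b) :=
      cover_node.mpr (Or.inr ⟨a, b, ha, hb, rfl⟩)
    refine ⟨fun p hp => ⟨hcov.1 p hp, ?_⟩, hcov.2⟩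
    rcases mem_pairUnion.mp hp with ⟨x, -, rfl⟩ | ⟨x, -, rfl⟩ <;> simp

lemma numConfigs_node (l r : BTree) :
    numConfigs (BTree.node l r) = (coversF l).card * (coversF r).card := by
  rw [numConfigs,
    Nat.card_congr (Equiv.subtypeEquivRight fun A => (isConfig_node_iff (l := l) (r := r))),
    Nat.card_eq_finsetCard, Finset.card_image_of_injOn (image_injOn l r), Finset.card_product]

/-! ### Internal positions -/

lemma internalPos_caterpillar : ∀ k : ℕ, internalPos (caterpillar (k + 1)) =
    (Finset.range k).image fun j => (List.replicate j false : Pos) := by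
  intro k
  induction k with
  | zero => simp [caterpillar, internalPos]
  | succ k ih =>
      rw [show caterpillar (k + 2) = BTree.node (caterpillar (k + 1)) BTree.leaf from rfl,
        internalPos_node, ih, show internalPos BTree.leaf = ∅ from rfl]
      ext p
      simp only [Finset.mem_insert, mem_pairUnion, Finset.mem_image, Finset.mem_range,
        Finset.notMem_empty, false_and, exists_false, or_false, exists_exists_and_eq_and]
      constructor
      · rintro (rfl | ⟨j, hj, rfl⟩)
        · exact ⟨0, by omega, rfl⟩
        · exact ⟨j + 1, by omega, by rw [List.replicate_succ]⟩
      · rintro ⟨j, hj, rfl⟩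
        cases j with
        | zero => exact Or.inl rfl
        | succ j => exact Or.inr ⟨j, by omega, by rw [List.replicate_succ]⟩

def cherry : BTree := BTree.node BTree.leaf BTree.leaf

lemma replicate_ne_true (j : ℕ) : (List.replicate j false : Pos) ≠ [true] := by
  cases j with
  | zero => simp
  | succ j => rw [List.replicate_succ]; simp

lemma mem_internalPos_pseudo {m : ℕ} (hm : 1 ≤ m) (p : Pos) :
    p ∈ internalPos (BTree.node (caterpillar m) cherry) ↔
      p = [true] ∨ ∃ j < m, p = List.replicate j false := by
  obtain ⟨k, rfl⟩ : ∃ k, m = k + 1 := ⟨m - 1, by omega⟩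
  rw [internalPos_node, internalPos_caterpillar,
    show internalPos cherry = {([] : Pos)} by
      rw [cherry, internalPos_node, show internalPos BTree.leaf = ∅ from rfl]
      simp [pairUnion]]
  simp only [Finset.mem_insert, mem_pairUnion, Finset.mem_image, Finset.mem_range,
    Finset.mem_singleton, exists_exists_and_eq_and, exists_eq_left]
  constructor
  · rintro (rfl | ⟨j, hj, rfl⟩ | rfl)
    · exact Or.inr ⟨0, by omega, rfl⟩
    · exact Or.inr ⟨j + 1, by omega, by rw [List.replicate_succ]⟩
    · exact Or.inl rfl
  · rintro (rfl | ⟨j, hj, rfl⟩)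
    · exact Or.inr (Or.inr rfl)
    · cases j with
      | zero => exact Or.inl rfl
      | succ j => exact Or.inr (Or.inl ⟨j, by omega, by rw [List.replicate_succ]⟩)

/-! ### Labeled histories -/

lemma replicate_prefix_iff {a b : ℕ} :
    (List.replicate a false : Pos) <+: List.replicate b false ↔ a ≤ b := by
  constructor
  · intro h; simpa using h.length_le
  · intro h
    refine ⟨List.replicate (b - a) false, ?_⟩
    rw [← List.replicate_add]; congr 1; omega

lemma not_true_prefix_replicate (j : ℕ) : ¬ (([true] : Pos) <+: List.replicate j false) := by
  cases j with
  | zero => intro h; simpa using h.length_le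
  | succ j => rw [List.replicate_succ]; intro h; simpa using (List.cons_prefix_cons.mp h).1

lemma not_replicate_prefix_true {j : ℕ} (hj : 1 ≤ j) :
    ¬ ((List.replicate j false : Pos) <+: [true]) := by
  obtain ⟨k, rfl⟩ : ∃ k, j = k + 1 := ⟨j - 1, by omega⟩
  rw [List.replicate_succ]
  intro h
  simpa using (List.cons_prefix_cons.mp h).1

/-- The unique labeled history of the caterpillar part, deepest node first. -/
def Dlist (m : ℕ) : List Pos := (List.range m).map fun j => List.replicate (m - 1 - j) false

lemma Dlist_length (m : ℕ) : (Dlist m).length = m := by simp [Dlist]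

lemma Dlist_getElem (m j : ℕ) (h : j < (Dlist m).length) :
    (Dlist m)[j] = List.replicate (m - 1 - j) false := by
  simp [Dlist]

lemma mem_Dlist {m : ℕ} (hm : 1 ≤ m) (p : Pos) :
    p ∈ Dlist m ↔ ∃ j < m, p = List.replicate j false := by
  simp only [Dlist, List.mem_map, List.mem_range]
  constructor
  · rintro ⟨j, hj, rfl⟩; exact ⟨m - 1 - j, by omega, rfl⟩
  · rintro ⟨j, hj, rfl⟩
    exact ⟨m - 1 - j, by omega, by congr 1; omega⟩

lemma Dlist_pairwise (m : ℕ) : (Dlist m).Pairwise (fun p q => ¬ p <+: q) := by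
  rw [List.pairwise_iff_get]
  intro i j hij
  have hi : (i : ℕ) < m := by simpa [Dlist_length] using i.2
  have hj : (j : ℕ) < m := by simpa [Dlist_length] using j.2
  simp only [List.get_eq_getElem, Dlist_getElem]
  rw [replicate_prefix_iff]
  have : (i : ℕ) < (j : ℕ) := hij
  omega

lemma Dlist_sorted (m : ℕ) :
    List.Pairwise (fun p q : Pos => q.length < p.length) (Dlist m) := by
  rw [List.pairwise_iff_get]
  intro i j hij
  have hi : (i : ℕ) < m := by simpa [Dlist_length] using i.2
  have hj : (j : ℕ) < m := by simpa [Dlist_length] using j.2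
  simp only [List.get_eq_getElem, Dlist_getElem, List.length_replicate]
  have : (i : ℕ) < (j : ℕ) := hij
  omega

lemma Dlist_nodup (m : ℕ) : (Dlist m).Nodup := by
  rw [List.Nodup, List.pairwise_iff_get]
  intro i j hij
  have hi : (i : ℕ) < m := by simpa [Dlist_length] using i.2
  have hj : (j : ℕ) < m := by simpa [Dlist_length] using j.2
  simp only [List.get_eq_getElem, Dlist_getElem]
  have : (i : ℕ) < (j : ℕ) := hij
  intro h
  apply_fun List.length at h
  simp only [List.length_replicate] at h
  omega

lemma true_not_mem_Dlist {m : ℕ} (hm : 1 ≤ m) : ([true] : Pos) ∉ Dlist m := by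
  rw [mem_Dlist hm]
  rintro ⟨j, hj, habs⟩
  exact replicate_ne_true j habs.symm

lemma insertIdx_append {α : Type*} (xs ys : List α) (a : α) :
    (xs ++ ys).insertIdx xs.length a = xs ++ a :: ys := by
  induction xs with
  | nil => simp
  | cons x xs ih => simpa [List.insertIdx_succ_cons] using ih

lemma third_iff (L : List Pos) :
    (∀ i j : Fin L.length, L.get i <+: L.get j → (j : ℕ) ≤ (i : ℕ)) ↔
      L.Pairwise (fun p q => ¬ p <+: q) := by
  rw [List.pairwise_iff_get]
  constructor
  · intro h i j hij hpre
    have := h i j hpre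
    have : (i : ℕ) < (j : ℕ) := hij
    omega
  · intro h i j hpre
    by_contra hc
    push_neg at hc
    exact h i j (by exact hc) hpre

lemma isLabHist_iff {m : ℕ} (hm : 1 ≤ m) (L : List Pos) :
    IsLabHist (BTree.node (caterpillar m) cherry) L ↔
      ∃ i < m, L = (Dlist m).insertIdx i [true] := by
  constructor
  · rintro ⟨hnd, hmem, hord⟩
    have hpw : L.Pairwise (fun p q => ¬ p <+: q) := (third_iff L).mp hord
    have htrue : ([true] : Pos) ∈ L :=
      (hmem [true]).mpr ((mem_internalPos_pseudo hm [true]).mpr (Or.inl rfl))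
    have hi0 : L.idxOf ([true] : Pos) < L.length := List.idxOf_lt_length_iff.mpr htrue
    set i := L.idxOf [true] with hidef
    have hi : i < L.length := hi0
    set M := L.erase [true] with hMdef
    have hMD : M = Dlist m := by
      have hMnd : M.Nodup := hnd.erase _
      have hMmem : ∀ p, p ∈ M ↔ p ∈ Dlist m := by
        intro p
        rw [hMdef, hnd.mem_erase_iff, hmem, mem_internalPos_pseudo hm, mem_Dlist hm]
        constructor
        · rintro ⟨hne, rfl | h⟩
          · exact absurd rfl hne
          · exact h
        · rintro ⟨j, hj, rfl⟩
          exact ⟨replicate_ne_true j, Or.inr ⟨j, hj, rfl⟩⟩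
      have hperm : M.Perm (Dlist m) :=
        List.perm_of_nodup_nodup_toFinset_eq hMnd (Dlist_nodup m)
          (by ext p; simp only [List.mem_toFinset]; exact hMmem p)
      haveI : Std.Antisymm (fun p q : Pos => q.length < p.length) :=
        ⟨fun a b h1 h2 => absurd h1 (by omega)⟩
      refine List.Perm.eq_of_pairwise' ?_ (Dlist_sorted m) hperm
      have hMpw : M.Pairwise (fun p q => ¬ p <+: q) :=
        hpw.sublist List.erase_sublist
      refine hMpw.imp_of_mem ?_
      intro a b ha hb hnpre
      obtain ⟨ja, hja, rfl⟩ := (mem_Dlist hm a).mp ((hMmem a).mp ha)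
      obtain ⟨jb, hjb, rfl⟩ := (mem_Dlist hm b).mp ((hMmem b).mp hb)
      rw [replicate_prefix_iff] at hnpre
      simp only [List.length_replicate]
      omega
    have hMlen : M.length = m := by rw [hMD, Dlist_length]
    have hLlen : L.length = m + 1 := by
      have := List.length_erase_of_mem htrue
      rw [← hMdef, hMlen] at this
      omega
    have hgetL : L[i]'hi = [true] := List.getElem_idxOf hi
    have hsplit : L = L.take i ++ [true] :: L.drop (i + 1) := by
      conv_lhs => rw [← List.take_append_drop i L]
      rw [← List.getElem_cons_drop (h := hi), hgetL]
    have hM2 : M = L.take i ++ L.drop (i + 1) := by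
      rw [hMdef, ← List.eraseIdx_idxOf_eq_erase, ← hidef,
        List.eraseIdx_eq_take_drop_succ]
    have hine : i ≠ m := by
      intro habs
      obtain ⟨j, hjlen, hjget⟩ := List.mem_iff_getElem.mp
        ((hmem []).mpr ((mem_internalPos_pseudo hm []).mpr (Or.inr ⟨0, by omega, rfl⟩)))
      have hjm : j ≠ m := by
        intro h
        have e1 : L[j]? = some [] := by rw [List.getElem?_eq_getElem hjlen, hjget]
        have e2 : L[i]? = some [true] := by rw [List.getElem?_eq_getElem hi, hgetL]
        rw [show j = i by omega] at e1
        rw [e1] at e2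
        simp at e2
      have hjlt : j < m := by omega
      have := (List.pairwise_iff_get.mp hpw) ⟨j, hjlen⟩ ⟨i, hi⟩
        (by simp only [Fin.mk_lt_mk]; omega)
      simp only [List.get_eq_getElem, hjget, hgetL] at this
      exact this List.nil_prefix
    refine ⟨i, by omega, ?_⟩
    have htake : (L.take i).length = i := by
      rw [List.length_take]; omega
    have key := insertIdx_append (L.take i) (L.drop (i + 1)) ([true] : Pos)
    rw [htake] at key
    rw [← hM2, ← hsplit] at key
    rw [hMD] at key
    exact key.symm
  · rintro ⟨i, him, rfl⟩
    have hlen : ((Dlist m).take i).length = i := by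
      rw [List.length_take, Dlist_length]; omega
    have hsplit : (Dlist m).insertIdx i [true] =
        (Dlist m).take i ++ [true] :: (Dlist m).drop i := by
      have key := insertIdx_append ((Dlist m).take i) ((Dlist m).drop i) ([true] : Pos)
      rw [hlen, List.take_append_drop] at key
      exact key
    have htdmem : ∀ p : Pos, p ∈ Dlist m ↔ p ∈ (Dlist m).take i ∨ p ∈ (Dlist m).drop i := by
      intro p
      conv_lhs => rw [← List.take_append_drop i (Dlist m)]
      exact List.mem_append
    have hdroplen : ((Dlist m).drop i).length = m - i := by
      rw [List.length_drop, Dlist_length]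
    refine ⟨?_, ?_, ?_⟩
    · rw [hsplit]
      have h1 : ((Dlist m).take i ++ (Dlist m).drop i).Nodup := by
        rw [List.take_append_drop]; exact Dlist_nodup m
      have h2 : ([true] : Pos) ∉ (Dlist m).take i ++ (Dlist m).drop i := by
        rw [List.take_append_drop]; exact true_not_mem_Dlist hm
      exact List.nodup_middle.mpr (List.nodup_cons.mpr ⟨h2, h1⟩)
    · intro p
      rw [hsplit, mem_internalPos_pseudo hm, ← mem_Dlist hm]
      simp only [List.mem_append, List.mem_cons]
      rw [htdmem p]
      tauto
    · rw [third_iff, hsplit, List.pairwise_append]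
      refine ⟨(Dlist_pairwise m).sublist (List.take_sublist _ _), ?_, ?_⟩
      · rw [List.pairwise_cons]
        refine ⟨?_, (Dlist_pairwise m).sublist (List.drop_sublist _ _)⟩
        intro y hy
        obtain ⟨j, hj, rfl⟩ := (mem_Dlist hm y).mp ((htdmem y).mpr (Or.inr hy))
        exact not_true_prefix_replicate j
      · intro x hx y hy
        obtain ⟨kx, hkx, hkxget⟩ := List.mem_iff_getElem.mp hx
        have hkxi : kx < i := by rwa [hlen] at hkx
        have hkxD : kx < (Dlist m).length := by rw [Dlist_length]; omega
        have hxval : x = List.replicate (m - 1 - kx) false := by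
          rw [← hkxget, List.getElem_take, Dlist_getElem]
        rcases List.mem_cons.mp hy with rfl | hy'
        · rw [hxval]
          exact not_replicate_prefix_true (by omega)
        · obtain ⟨ky, hky, hkyget⟩ := List.mem_iff_getElem.mp hy'
          have hkyD : i + ky < (Dlist m).length := by
            rw [hdroplen] at hky; rw [Dlist_length]; omega
          have hyval : y = List.replicate (m - 1 - (i + ky)) false := by
            rw [← hkyget, List.getElem_drop, Dlist_getElem]
          rw [hxval, hyval, replicate_prefix_iff]
          rw [hdroplen] at hky
          omega

lemma indexOf_insertIdx {m i : ℕ} (hm : 1 ≤ m) (him : i < m) :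
    ((Dlist m).insertIdx i [true]).idxOf ([true] : Pos) = i := by
  have hlen : ((Dlist m).take i).length = i := by
    rw [List.length_take, Dlist_length]; omega
  have hsplit : (Dlist m).insertIdx i [true] =
      (Dlist m).take i ++ [true] :: (Dlist m).drop i := by
    have key := insertIdx_append ((Dlist m).take i) ((Dlist m).drop i) ([true] : Pos)
    rw [hlen, List.take_append_drop] at key
    exact key
  have hnot : ([true] : Pos) ∉ (Dlist m).take i :=
    fun h => true_not_mem_Dlist hm ((List.take_sublist _ _).subset h)
  rw [hsplit, List.idxOf_append_of_notMem hnot, List.idxOf_cons_self, hlen]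
  omega

lemma numHist_pseudo {m : ℕ} (hm : 1 ≤ m) :
    numHist (BTree.node (caterpillar m) cherry) = m := by
  have hiff : ∀ L : List Pos, IsLabHist (BTree.node (caterpillar m) cherry) L ↔
      L ∈ (Finset.range m).image fun i => (Dlist m).insertIdx i [true] := by
    intro L
    rw [isLabHist_iff hm]
    simp only [Finset.mem_image, Finset.mem_range]
    constructor
    · rintro ⟨i, hi, rfl⟩; exact ⟨i, hi, rfl⟩
    · rintro ⟨i, hi, rfl⟩; exact ⟨i, hi, rfl⟩
  rw [numHist, Nat.card_congr (Equiv.subtypeEquivRight hiff), Nat.card_eq_finsetCard,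
    Finset.card_image_of_injOn, Finset.card_range]
  intro a ha b hb hab
  simp only [Finset.coe_range, Set.mem_Iio] at ha hb
  have := congrArg (fun L : List Pos => L.idxOf ([true] : Pos)) hab
  simpa [indexOf_insertIdx hm ha, indexOf_insertIdx hm hb] using this

/-- For the pseudocaterpillar tree `P_n` (`n ≥ 4`), whose root subtrees are the
caterpillar `C_{n-2}` and a cherry, the number of root ancestral configurations is
`2(n-2)` and the number of labeled histories is `n-2`. -/
theorem pseudocaterpillar_counts (n : ℕ) (hn : 4 ≤ n) :
    numConfigs (node (caterpillar (n - 2)) (node BTree.leaf BTree.leaf)) =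
        2 * (n - 2) ∧
    numHist (node (caterpillar (n - 2)) (node BTree.leaf BTree.leaf)) = n - 2 := by
  obtain ⟨k, hk⟩ : ∃ k, n - 2 = k + 1 := ⟨n - 3, by omega⟩
  constructor
  · rw [show BTree.node BTree.leaf BTree.leaf = cherry from rfl, numConfigs_node,
      show (coversF cherry).card = 2 by
        rw [cherry, coversF_card_node]; simp [coversF],
      hk, coversF_caterpillar_card k]
    omega
  · rw [show BTree.node BTree.leaf BTree.leaf = cherry from rfl, numHist_pseudo (by omega)]
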